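/- Let r ∈ ℝ, r ≠ 0, set u = e^r/(e^r − 1) − 1/r and c = r/(e^r − 1), and let μ_0 be the Borel measure on [0,1] with density c e^{r x} with respect to Lebesgue measure λ on [0,1]. Then μ_0 is a probability measure with mean ∫_0^1 x μ_0(dx) = u, and inf{ H(μ | λ) : μ a Borel probability measure on [0,1] with ∫_0^1 x μ(dx) = u } = H(μ_0 | λ) = r(u − 1) + log(1 + r u). -/

import Mathlib

open MeasureTheory ProbabilityTheory Filter Topology
open scoped ENNReal NNReal Classical

/-- Relative entropy (Kullback–Leibler divergence) `H(υ|μ)`, as an extended real: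
`∫ log(dυ/dμ) dυ` if `υ ≪ μ` (and the integral exists), and `+∞` otherwise. -/
noncomputable def relEnt {α : Type*} [MeasurableSpace α] (υ μ : Measure α) : EReal :=
  if υ ≪ μ ∧ Integrable (llr υ μ) υ then ((∫ x, llr υ μ x ∂υ : ℝ) : EReal) else ⊤

/-- The J-divergence `J(μ,ν) = inf { H(υ|μ) + H(υ|ν) : υ a probability measure }`. -/
noncomputable def Jdiv {α : Type*} [MeasurableSpace α] (μ ν : Measure α) : EReal :=
  ⨅ (υ : Measure α) (_ : IsProbabilityMeasure υ), relEnt υ μ + relEnt υ ν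

lemma gibbs_nonneg {α : Type*} [MeasurableSpace α] (μ η : Measure α)
    [IsProbabilityMeasure μ] [IsProbabilityMeasure η]
    (h : μ ≪ η) (hint : Integrable (llr μ η) μ) : 0 ≤ ∫ x, llr μ η x ∂μ := by
  have hmeq : (fun x => Real.exp (-llr μ η x)) =ᵐ[μ] fun x => (η.rnDeriv μ x).toReal :=
    exp_neg_llr h
  have hint2 : Integrable (fun x => Real.exp (-llr μ η x)) μ :=
    (Measure.integrable_toReal_rnDeriv).congr hmeq.symm
  have h1 : ∫ x, -llr μ η x ∂μ ≤ ∫ x, (Real.exp (-llr μ η x) - 1) ∂μ := by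
    refine integral_mono hint.neg (hint2.sub (integrable_const 1)) fun x => ?_
    have := Real.add_one_le_exp (-llr μ η x)
    simp only [Pi.neg_apply]
    linarith
  rw [integral_neg, integral_sub hint2 (integrable_const 1), integral_congr_ae hmeq] at h1
  have h3 : ∫ x, (η.rnDeriv μ x).toReal ∂μ ≤ (η Set.univ).toReal := by
    have := Measure.setIntegral_toReal_rnDeriv_le (μ := η) (ν := μ) (s := Set.univ)
      (measure_ne_top η _)
    simpa using this
  simp only [integral_const, measure_univ, probReal_univ, ENNReal.toReal_one, smul_eq_mul, one_mul] at h1 h3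
  linarith

/-- Let r ≠ 0, u = e^r/(e^r−1) − 1/r, c = r/(e^r−1), and let μ₀ have
density c e^{rx} with respect to Lebesgue measure λ on [0,1]. Then μ₀ is a probability
measure with mean u, and the infimum of H(μ|λ) over Borel probability measures μ on [0,1]
with mean u equals `H(μ₀|λ) = r(u−1) + log(1 + ru)`. -/
theorem stmt_15 (r : ℝ) (hr : r ≠ 0) (u c : ℝ)
    (hu : u = Real.exp r / (Real.exp r - 1) - 1 / r) (hc : c = r / (Real.exp r - 1))
    (μ₀ : Measure ℝ)
    (hμ₀ : μ₀ = (volume.restrict (Set.Icc 0 1)).withDensity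
      (fun x => ENNReal.ofReal (c * Real.exp (r * x)))) :
    IsProbabilityMeasure μ₀ ∧ (∫ x, x ∂μ₀) = u ∧
    (⨅ (μ : Measure ℝ) (_ : IsProbabilityMeasure μ) (_ : μ (Set.Icc 0 1) = 1)
        (_ : ∫ x, x ∂μ = u), relEnt μ (volume.restrict (Set.Icc 0 1)))
      = relEnt μ₀ (volume.restrict (Set.Icc 0 1)) ∧
    relEnt μ₀ (volume.restrict (Set.Icc 0 1))
      = ((r * (u - 1) + Real.log (1 + r * u) : ℝ) : EReal) := by
  set ν := volume.restrict (Set.Icc (0:ℝ) 1) with hν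
  have he : Real.exp r - 1 ≠ 0 := sub_ne_zero.mpr (by simp [hr])
  haveI hνprob : IsProbabilityMeasure ν := ⟨by simp [hν, Real.volume_Icc]⟩
  have hcont : Continuous fun x : ℝ => Real.exp (r * x) := by continuity
  have hint_exp : Integrable (fun x => Real.exp (r * x)) ν := hcont.integrableOn_Icc
  -- ∫ exp(r x) over [0,1]
  have hIccIoc : ∀ g : ℝ → ℝ, ∫ x, g x ∂ν = ∫ x in (0:ℝ)..1, g x := by
    intro g
    rw [hν, integral_Icc_eq_integral_Ioc, ← intervalIntegral.integral_of_le zero_le_one]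
  have hderexp : ∀ x : ℝ, HasDerivAt (fun y => Real.exp (r*y)) (Real.exp (r*x) * r) x := by
    intro x
    have h1 : HasDerivAt (fun y : ℝ => r * y) r x := by simpa using (hasDerivAt_id x).const_mul r
    exact (Real.hasDerivAt_exp (r*x)).comp x h1
  have hZ : ∫ x, Real.exp (r * x) ∂ν = (Real.exp r - 1) / r := by
    rw [hIccIoc]
    have hder : ∀ x ∈ Set.uIcc (0:ℝ) 1, HasDerivAt (fun y => Real.exp (r*y)/r) (Real.exp (r*x)) x := by
      intro x _
      have := (hderexp x).div_const r
      simpa [mul_div_assoc, mul_div_cancel_right₀ _ hr] using this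
    rw [intervalIntegral.integral_eq_sub_of_hasDerivAt hder (hcont.intervalIntegrable 0 1)]
    simp [Real.exp_zero]
    ring
  have hM : ∫ x, x * Real.exp (r * x) ∂ν = (1/r - 1/r^2) * Real.exp r + 1/r^2 := by
    rw [hIccIoc]
    have hder : ∀ x ∈ Set.uIcc (0:ℝ) 1,
        HasDerivAt (fun y => (y/r - 1/r^2) * Real.exp (r*y)) (x * Real.exp (r*x)) x := by
      intro x _
      have h1 : HasDerivAt (fun y : ℝ => y/r - 1/r^2) (1/r) x :=
        HasDerivAt.sub_const (1/r^2) ((hasDerivAt_id x).div_const r)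
      have : HasDerivAt (fun y => (y/r - 1/r^2) * Real.exp (r*y)) _ x := h1.mul (hderexp x)
      convert this using 1
      field_simp
      ring
    rw [intervalIntegral.integral_eq_sub_of_hasDerivAt hder
      ((continuous_id.mul hcont).intervalIntegrable 0 1)]
    simp [Real.exp_zero]
  -- μ₀ as a tilted measure
  have hμ₀tilt : μ₀ = ν.tilted (fun x => r * x) := by
    rw [hμ₀, Measure.tilted, hZ]
    congr 1
    funext x
    congr 1
    rw [hc]
    field_simp
  haveI hprob₀ : IsProbabilityMeasure μ₀ := by
    rw [hμ₀tilt]; exact isProbabilityMeasure_tilted hint_exp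
  -- mean of μ₀
  have hmean : ∫ x, x ∂μ₀ = u := by
    rw [hμ₀tilt, integral_tilted, hZ]
    have heq : ∀ x : ℝ, (Real.exp (r*x) / ((Real.exp r - 1)/r)) • x
        = (r/(Real.exp r - 1)) * (x * Real.exp (r*x)) := by
      intro x; rw [smul_eq_mul]; field_simp
    simp_rw [heq]
    rw [integral_const_mul, hM, hu]
    field_simp
    ring
  -- absolute continuity and a.e. support facts
  have hAC0 : μ₀ ≪ ν := by rw [hμ₀tilt]; exact tilted_absolutelyContinuous ν _
  have hνIcc : ∀ᵐ x ∂ν, x ∈ Set.Icc (0:ℝ) 1 := ae_restrict_mem measurableSet_Icc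
  set L := Real.log ((Real.exp r - 1)/r) with hL
  -- integrability of x ↦ r x w.r.t. any μ ≪ ν
  have hrx_int : ∀ (μ : Measure ℝ) [IsProbabilityMeasure μ], μ ≪ ν →
      Integrable (fun x => r * x) μ := by
    intro μ _ hACμ
    refine Integrable.mono' (integrable_const |r|)
      (Continuous.aestronglyMeasurable (by continuity)) ?_
    filter_upwards [hACμ.ae_le hνIcc] with x hx
    rw [Real.norm_eq_abs, abs_mul]
    have hx1 : |x| ≤ 1 := abs_le.mpr ⟨by linarith [hx.1], hx.2⟩
    calc |r| * |x| ≤ |r| * 1 := by gcongr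
      _ = |r| := mul_one _
  -- llr of μ₀ w.r.t. ν
  have hllr0 : llr μ₀ ν =ᵐ[μ₀] fun x => r * x - L := by
    have h1 : llr (ν.tilted (fun x => r * x)) ν
        =ᵐ[ν] fun x => r * x - Real.log (∫ z, Real.exp (r * z) ∂ν) + llr ν ν x :=
      llr_tilted_left (Measure.AbsolutelyContinuous.refl ν) hint_exp
        (by fun_prop)
    have h2 : llr ν ν =ᵐ[ν] 0 := by
      filter_upwards [Measure.rnDeriv_self ν] with x hx
      simp [llr, hx]
    have h3 : llr (ν.tilted (fun x => r * x)) ν =ᵐ[ν] fun x => r * x - L := by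
      filter_upwards [h1, h2] with x hx1 hx2
      rw [hx1, hx2, hZ]
      simp [hL]
    rw [hμ₀tilt]
    exact (tilted_absolutelyContinuous ν _).ae_le h3
  have hbound : Integrable (fun x => r * x - L) μ₀ :=
    (hrx_int μ₀ hAC0).sub (integrable_const L)
  have hint_llr0 : Integrable (llr μ₀ ν) μ₀ := hbound.congr hllr0.symm
  have hval : ∫ x, llr μ₀ ν x ∂μ₀ = r * u - L := by
    rw [integral_congr_ae hllr0, integral_sub (hrx_int μ₀ hAC0) (integrable_const L),
      integral_const_mul, hmean, integral_const]
    simp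
  -- algebraic identity for the claimed value
  have hcne : c ≠ 0 := by rw [hc]; exact div_ne_zero hr he
  have h1ru : 1 + r * u = c * Real.exp r := by
    rw [hu, hc]; field_simp; ring
  have hcZ : c = ((Real.exp r - 1)/r)⁻¹ := by rw [hc, inv_div]
  have hvalue : r * (u - 1) + Real.log (1 + r * u) = r * u - L := by
    rw [h1ru, Real.log_mul hcne (Real.exp_ne_zero r), Real.log_exp, hL, hcZ, Real.log_inv]
    ring
  -- relEnt of μ₀
  have hrelEnt : relEnt μ₀ ν = ((r * u - L : ℝ) : EReal) := by
    rw [relEnt, if_pos ⟨hAC0, hint_llr0⟩, hval]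
  -- μ₀ gives full mass to [0,1]
  have hcompl : μ₀ (Set.Icc (0:ℝ) 1)ᶜ = 0 := by
    refine hAC0 ?_
    rw [hν, Measure.restrict_apply measurableSet_Icc.compl]
    simp
  have hIcc0 : μ₀ (Set.Icc (0:ℝ) 1) = 1 := by
    have h := measure_add_measure_compl (μ := μ₀) (measurableSet_Icc (a := (0:ℝ)) (b := 1))
    rwa [hcompl, add_zero, measure_univ] at h
  -- lower bound
  have hlow : ∀ (μ : Measure ℝ) [IsProbabilityMeasure μ], (∫ x, x ∂μ) = u →
      ((r * u - L : ℝ) : EReal) ≤ relEnt μ ν := by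
    intro μ hPμ hm
    by_cases hcase : μ ≪ ν ∧ Integrable (llr μ ν) μ
    · obtain ⟨hACμ, hintμ⟩ := hcase
      rw [relEnt, if_pos ⟨hACμ, hintμ⟩, EReal.coe_le_coe_iff]
      have hfμ := hrx_int μ hACμ
      have key := integral_llr_tilted_right hACμ hfμ hint_exp hintμ
      haveI : IsProbabilityMeasure (ν.tilted fun x => r * x) :=
        isProbabilityMeasure_tilted hint_exp
      have hACt : μ ≪ ν.tilted (fun x => r * x) :=
        hACμ.trans (absolutelyContinuous_tilted hint_exp)
      have hintt : Integrable (llr μ (ν.tilted fun x => r * x)) μ :=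
        integrable_llr_tilted_right hACμ hfμ hintμ hint_exp
      have hnn := gibbs_nonneg μ (ν.tilted fun x => r * x) hACt hintt
      have hfint : ∫ x, r * x ∂μ = r * u := by rw [integral_const_mul, hm]
      rw [hZ, hfint, ← hL] at key
      linarith
    · rw [relEnt, if_neg hcase]; exact le_top
  refine ⟨hprob₀, hmean, ?_, ?_⟩
  · apply le_antisymm
    · exact iInf_le_of_le μ₀ (iInf_le_of_le hprob₀ (iInf_le_of_le hIcc0
        (iInf_le_of_le hmean le_rfl)))
    · refine le_iInf fun μ => le_iInf fun hP => le_iInf fun hIcc => le_iInf fun hm => ?_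
      rw [hrelEnt]
      exact hlow μ hm
  · rw [hrelEnt]
    exact_mod_cast hvalue.symm
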